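/- Let n, k ≥ 1 be integers, let P ⊆ ℝⁿ be a [0,k]-polytope, let c ∈ ℤⁿ be nonzero, and let x⁰ be a vertex of P. Then there exists a simplex path in P from x⁰ to a vertex x* that maximizes cᵀx over P, whose length is at most n·k·(⌈log₂‖c‖_∞⌉ + 1). -/

import Mathlib

/-- A vertex of `P` is an extreme point of `P`. -/
def IsVertex {n : ℕ} (P : Set (Fin n → ℝ)) (x : Fin n → ℝ) : Prop :=
  x ∈ Set.extremePoints ℝ P

/-- Two distinct vertices are adjacent if the segment between them is a face
(i.e. an extreme subset) of `P`. -/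
def AdjacentVertices {n : ℕ} (P : Set (Fin n → ℝ)) (x y : Fin n → ℝ) : Prop :=
  x ≠ y ∧ IsVertex P x ∧ IsVertex P y ∧ IsExtreme ℝ P (segment ℝ x y)

/-- A `[0,k]`-polytope in `ℝⁿ`: the convex hull of a finite set, contained in the box
`[0,k]ⁿ`, all of whose vertices (extreme points) have integer coordinates. -/
def IsZeroKPolytope (n k : ℕ) (P : Set (Fin n → ℝ)) : Prop :=
  (∃ V : Set (Fin n → ℝ), V.Finite ∧ P = convexHull ℝ V) ∧
  (∀ x ∈ P, ∀ j, 0 ≤ x j ∧ x j ≤ (k : ℝ)) ∧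
  (∀ x, IsVertex P x → ∀ j, ∃ z : ℤ, x j = (z : ℝ))

open Set

section Aux

variable {n : ℕ}

lemma hull_le_of_forall_le (g : (Fin n → ℝ) →L[ℝ] ℝ) {W : Set (Fin n → ℝ)} {B : ℝ}
    (h : ∀ v ∈ W, g v ≤ B) {z : Fin n → ℝ} (hz : z ∈ convexHull ℝ W) : g z ≤ B :=
  convexHull_min h (convex_halfSpace_le ⟨g.map_add, fun c x => g.map_smul c x⟩ B) hz

lemma right_mem_extremePoints_segment {x y : Fin n → ℝ} (hxy : x ≠ y) :
    y ∈ (segment ℝ x y).extremePoints ℝ := by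
  rw [mem_extremePoints_iff_forall_segment]
  refine ⟨right_mem_segment ℝ x y, ?_⟩
  intro a ha b hb hy
  rw [segment_eq_image'] at ha hb hy
  obtain ⟨s, hs, rfl⟩ := ha
  obtain ⟨t, ht, rfl⟩ := hb
  obtain ⟨r, hr, hyr⟩ := hy
  simp only at hyr
  have hyx : y - x ≠ 0 := sub_ne_zero_of_ne (Ne.symm hxy)
  have key0 : (1 - (s + r * (t - s))) • (y - x) = 0 := by
    have h2 : (1 - (s + r * (t - s))) • (y - x)
        = y - ((x + s • (y - x)) + r • ((x + t • (y - x)) - (x + s • (y - x)))) := by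
      module
    rw [h2, hyr, sub_self]
  have key : s + r * (t - s) = 1 := by
    rcases smul_eq_zero.mp key0 with h | h
    · linarith [h]
    · exact absurd h hyx
  rcases eq_or_lt_of_le hr.2 with h1 | h1
  · right
    have htt : t = 1 := by nlinarith [hs.1, hs.2, ht.1, ht.2]
    rw [htt]; module
  · left
    have hs1 : s = 1 := by nlinarith [hs.1, hs.2, ht.1, ht.2, hr.1]
    rw [hs1]; module

lemma isExtreme_hyperplane_face (P : Set (Fin n → ℝ)) {W : Finset (Fin n → ℝ)}
    (hface : IsExtreme ℝ P (convexHull ℝ (↑W : Set (Fin n → ℝ))))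
    (g : (Fin n → ℝ) →L[ℝ] ℝ) (m : ℝ) (hmax : ∀ u ∈ W, g u ≤ m) :
    IsExtreme ℝ P {z ∈ convexHull ℝ (↑W : Set (Fin n → ℝ)) | g z = m} := by
  constructor
  · exact fun z hz => hface.1 hz.1
  · intro x₁ hx₁ x₂ hx₂ z hz hzseg
    obtain ⟨h1, h2⟩ : _ ∧ _ := ⟨hface.2 hx₁ hx₂ hz.1 hzseg,
      hface.right_mem_of_mem_openSegment hx₁ hx₂ hz.1 hzseg⟩
    have b1 : g x₁ ≤ m := hull_le_of_forall_le g hmax h1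
    have b2 : g x₂ ≤ m := hull_le_of_forall_le g hmax h2
    obtain ⟨a, b, ha, hb, hab, hz'⟩ := hzseg
    have hgz : a * g x₁ + b * g x₂ = m := by
      have h3 := hz.2
      rw [← hz'] at h3
      simpa [map_add, map_smul, smul_eq_mul] using h3
    have hm : a * m + b * m = m := by rw [← add_mul, hab, one_mul]
    have e1 : g x₁ = m := by
      have h4 : a * g x₁ = a * m := by
        nlinarith [mul_le_mul_of_nonneg_left b1 ha.le, mul_le_mul_of_nonneg_left b2 hb.le]
      exact mul_left_cancel₀ ha.ne' h4
    have e2 : g x₂ = m := by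
      have h4 : b * g x₂ = b * m := by
        nlinarith [mul_le_mul_of_nonneg_left b1 ha.le, mul_le_mul_of_nonneg_left b2 hb.le]
      exact mul_left_cancel₀ hb.ne' h4
    exact ⟨h1, e1⟩

lemma convexHull_filter_eq (W : Finset (Fin n → ℝ)) (g : (Fin n → ℝ) →L[ℝ] ℝ) (m : ℝ)
    (hmax : ∀ u ∈ W, g u ≤ m) :
    convexHull ℝ (↑(W.filter (fun u => g u = m)) : Set (Fin n → ℝ))
      = {z ∈ convexHull ℝ (↑W : Set (Fin n → ℝ)) | g z = m} := by
  apply Subset.antisymm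
  · apply convexHull_min
    · intro u hu
      simp only [Finset.coe_filter, mem_setOf_eq] at hu
      exact ⟨subset_convexHull ℝ _ hu.1, hu.2⟩
    · exact (convex_convexHull ℝ _).inter
        (convex_hyperplane ⟨g.map_add, fun c x => g.map_smul c x⟩ m)
  · rintro z ⟨hzW, hzm⟩
    obtain ⟨lam, hlam0, hlam1, hlamz⟩ := Finset.mem_convexHull.mp hzW
    have hzrep : z = ∑ y ∈ W, lam y • y := by
      rw [← hlamz, Finset.centerMass_eq_of_sum_1 _ _ hlam1]; rfl
    have hgz : ∑ y ∈ W, lam y * g y = m := by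
      rw [← hzm, hzrep, map_sum]
      simp [map_smul, smul_eq_mul]
    have hzero : ∀ y ∈ W, lam y * (m - g y) = 0 := by
      rw [← Finset.sum_eq_zero_iff_of_nonneg]
      · simp only [mul_sub]
        rw [Finset.sum_sub_distrib, ← Finset.sum_mul, hlam1, one_mul, hgz, sub_self]
      · intro y hy
        exact mul_nonneg (hlam0 y hy) (by linarith [hmax y hy])
    have hout : ∀ y ∈ W, y ∉ W.filter (fun u => g u = m) → lam y = 0 := by
      intro y hy hynot
      simp only [Finset.mem_filter] at hynot
      have hne : g y ≠ m := fun h => hynot ⟨hy, h⟩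
      rcases mul_eq_zero.mp (hzero y hy) with h | h
      · exact h
      · exact absurd (by linarith [sub_eq_zero.mp h] : g y = m) hne
    have hsum1 : ∑ y ∈ W.filter (fun u => g u = m), lam y = 1 := by
      rw [Finset.sum_subset (Finset.filter_subset _ _) hout]
      exact hlam1
    have hrep2 : z = ∑ y ∈ W.filter (fun u => g u = m), lam y • y := by
      rw [hzrep, Finset.sum_subset (Finset.filter_subset _ _)]
      intro y hy hynot
      rw [hout y hy hynot, zero_smul]
    rw [hrep2]
    have := Finset.centerMass_mem_convexHull (W.filter (fun u => g u = m))
      (fun y hy => hlam0 y (Finset.filter_subset _ _ hy)) (by rw [hsum1]; norm_num)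
      (fun y hy => Finset.mem_coe.mpr hy)
    rw [Finset.centerMass_eq_of_sum_1 _ _ hsum1] at this
    exact this

lemma exists_improving_neighbor (P : Set (Fin n → ℝ)) (w : (Fin n → ℝ) →L[ℝ] ℝ)
    (x : Fin n → ℝ) (hx : x ∈ P.extremePoints ℝ) (W : Finset (Fin n → ℝ)) :
    x ∈ W → IsExtreme ℝ P (convexHull ℝ (↑W : Set (Fin n → ℝ))) →
    (∃ z ∈ convexHull ℝ (↑W : Set (Fin n → ℝ)), w x < w z) →
    ∃ y, AdjacentVertices P x y ∧ w x < w y := by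
  classical
  induction W using Finset.strongInduction with
  | _ W IH =>
  intro hxW hface himp
  -- an improving vertex exists
  have himpv : ∃ u ∈ W, w x < w u := by
    by_contra hcon
    push_neg at hcon
    obtain ⟨z, hz, hwz⟩ := himp
    exact absurd (hull_le_of_forall_le w hcon hz) (not_le.mpr hwz)
  obtain ⟨us, husW, hus⟩ := himpv
  have husx : us ≠ x := fun h => by subst h; exact lt_irrefl _ hus
  by_cases hcard : W.card ≤ 2
  · -- base case : W = {x, us}
    have hsub : ({x, us} : Finset (Fin n → ℝ)) ⊆ W := by
      intro v hv
      rcases Finset.mem_insert.mp hv with rfl | hv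
      · exact hxW
      · rwa [Finset.mem_singleton.mp hv]
    have hWeq : ({x, us} : Finset (Fin n → ℝ)) = W := by
      apply Finset.eq_of_subset_of_card_le hsub
      rwa [Finset.card_insert_of_notMem (by simpa using (Ne.symm husx)), Finset.card_singleton]
    have hcoe : (↑W : Set (Fin n → ℝ)) = {x, us} := by rw [← hWeq]; simp
    have hseg : IsExtreme ℝ P (segment ℝ x us) := by
      rw [← convexHull_pair]
      rw [hcoe] at hface
      exact hface
    refine ⟨us, ⟨Ne.symm husx, hx, ?_, hseg⟩, hus⟩
    exact hseg.extremePoints_subset_extremePoints (right_mem_extremePoints_segment (Ne.symm husx))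
  -- main case
  push_neg at hcard
  have husE : us ∈ W.erase x := Finset.mem_erase.mpr ⟨husx, husW⟩
  -- x not in hull of the others
  have hK : x ∉ convexHull ℝ (↑(W.erase x) : Set (Fin n → ℝ)) := by
    intro hxK
    have hsub : (↑W : Set (Fin n → ℝ)) ⊆ convexHull ℝ (↑(W.erase x) : Set (Fin n → ℝ)) := by
      intro u hu
      by_cases hux : u = x
      · subst hux; exact hxK
      · exact subset_convexHull ℝ _ (by
          simp only [Finset.coe_erase, Set.mem_diff, Set.mem_singleton_iff]
          exact ⟨hu, hux⟩)
    have heq : convexHull ℝ (↑W : Set (Fin n → ℝ))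
        = convexHull ℝ (↑(W.erase x) : Set (Fin n → ℝ)) :=
      Subset.antisymm (convexHull_min hsub (convex_convexHull ℝ _))
        (convexHull_mono (by exact_mod_cast Finset.coe_subset.mpr (Finset.erase_subset x W)))
    have hxext : x ∈ (convexHull ℝ (↑W : Set (Fin n → ℝ))).extremePoints ℝ :=
      inter_extremePoints_subset_extremePoints_of_subset hface.1
        ⟨subset_convexHull ℝ _ (Finset.mem_coe.mpr hxW), hx⟩
    rw [heq] at hxext
    have hmem := extremePoints_convexHull_subset hxext
    simp at hmem
  -- separating functional
  obtain ⟨f, ucut, hcut, hcutx⟩ := geometric_hahn_banach_closed_point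
    (convex_convexHull ℝ _) ((W.erase x).finite_toSet.isClosed_convexHull ℝ) hK
  have hs : ∀ u ∈ W.erase x, 0 < f x - f u := by
    intro u hu
    have := hcut u (subset_convexHull ℝ _ (Finset.mem_coe.mpr hu))
    linarith
  -- the "finish via a proper tight face" helper
  have finish : ∀ (g : (Fin n → ℝ) →L[ℝ] ℝ), (∀ u ∈ W, g u ≤ g x) →
      (∃ u' ∈ W, g u' = g x ∧ w x < w u') → (∃ u'' ∈ W, g u'' ≠ g x) →
      ∃ y, AdjacentVertices P x y ∧ w x < w y := by
    rintro g hg ⟨u', hu'W, hu'g, hu'w⟩ ⟨u'', hu''W, hu''⟩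
    have hTss : W.filter (fun u => g u = g x) ⊂ W := Finset.filter_ssubset.mpr ⟨u'', hu''W, hu''⟩
    have hxT : x ∈ W.filter (fun u => g u = g x) := Finset.mem_filter.mpr ⟨hxW, rfl⟩
    have hu'T : u' ∈ W.filter (fun u => g u = g x) := Finset.mem_filter.mpr ⟨hu'W, hu'g⟩
    have hfT : IsExtreme ℝ P (convexHull ℝ (↑(W.filter (fun u => g u = g x)) : Set (Fin n → ℝ))) := by
      rw [convexHull_filter_eq W g (g x) hg]
      exact isExtreme_hyperplane_face P hface g (g x) hg
    exact IH _ hTss hxT hfT ⟨u', subset_convexHull ℝ _ (Finset.mem_coe.mpr hu'T), hu'w⟩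
  -- θ* construction
  set A := (W.erase x).filter (fun u => w x < w u) with hA
  have husA : us ∈ A := Finset.mem_filter.mpr ⟨husE, hus⟩
  obtain ⟨u₁, hu₁A, hu₁min⟩ := Finset.exists_min_image A
    (fun u => (f x - f u) / ((f x - f u) + (w u - w x))) ⟨us, husA⟩
  have hu₁E : u₁ ∈ W.erase x := (Finset.mem_filter.mp hu₁A).1
  have hu₁w : w x < w u₁ := (Finset.mem_filter.mp hu₁A).2
  have hden : ∀ u ∈ A, 0 < (f x - f u) + (w u - w x) := by
    intro u hu
    have h1 := hs u (Finset.mem_filter.mp hu).1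
    have h2 := (Finset.mem_filter.mp hu).2
    linarith
  set θ := (f x - f u₁) / ((f x - f u₁) + (w u₁ - w x)) with hθ
  have hθpos : 0 < θ := div_pos (hs u₁ hu₁E) (hden u₁ hu₁A)
  have hθlt : θ < 1 := by
    rw [hθ, div_lt_one (hden u₁ hu₁A)]
    linarith [hu₁w]
  set h := (1 - θ) • f + θ • w with hh
  have happ : ∀ z, h z = (1 - θ) * f z + θ * w z := by
    intro z; rw [hh]; simp [smul_eq_mul]
  have hmaxh : ∀ u ∈ W, h u ≤ h x := by
    intro u hu
    by_cases hux : u = x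
    · subst hux; exact le_refl _
    · have huE : u ∈ W.erase x := Finset.mem_erase.mpr ⟨hux, hu⟩
      have hsu := hs u huE
      rw [happ, happ]
      by_cases huA : u ∈ A
      · have hminu := hu₁min u huA
        have hdenu := hden u huA
        have hθle : θ * ((f x - f u) + (w u - w x)) ≤ f x - f u :=
          (le_div_iff₀ hdenu).mp hminu
        linarith
      · have hwu : w u ≤ w x := by
          by_contra hc
          exact huA (Finset.mem_filter.mpr ⟨huE, not_le.mp hc⟩)
        nlinarith [hθpos, hθlt]
  have htight : h u₁ = h x := by
    rw [happ, happ]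
    have h5 : θ * ((f x - f u₁) + (w u₁ - w x)) = f x - f u₁ := by
      rw [hθ]; exact div_mul_cancel₀ _ (hden u₁ hu₁A).ne'
    linarith
  by_cases hdeg : ∀ u ∈ W, h u = h x
  case neg =>
    push_neg at hdeg
    obtain ⟨u₃, hu₃W, hu₃⟩ := hdeg
    exact finish h hmaxh ⟨u₁, Finset.mem_of_mem_erase hu₁E, htight, hu₁w⟩ ⟨u₃, hu₃W, hu₃⟩
  case pos =>
  -- degenerate : every vertex improves
  have himpall : ∀ u ∈ W.erase x, w x < w u := by
    intro u huE
    have heq := hdeg u (Finset.mem_of_mem_erase huE)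
    rw [happ, happ] at heq
    have hsu := hs u huE
    by_contra hc
    push_neg at hc
    nlinarith [mul_nonneg hθpos.le (sub_nonneg.mpr hc)]
  by_cases hcol : ∃ a : Fin n → ℝ, ∀ u ∈ W.erase x, ∀ j, x j - u j = (f x - f u) * a j
  · -- collinear case
    obtain ⟨a, ha⟩ := hcol
    obtain ⟨u₀, hu₀E, hu₀max⟩ := Finset.exists_max_image (W.erase x) (fun u => f x - f u) ⟨us, husE⟩
    have hs₀ := hs u₀ hu₀E
    have hWsub : (↑W : Set (Fin n → ℝ)) ⊆ convexHull ℝ ({x, u₀} : Set (Fin n → ℝ)) := by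
      intro u hu
      by_cases hux : u = x
      · subst hux; exact subset_convexHull ℝ _ (Set.mem_insert _ _)
      · have huE : u ∈ W.erase x := Finset.mem_erase.mpr ⟨hux, hu⟩
        have hsu := hs u huE
        have hle := hu₀max u huE
        rw [convexHull_pair]
        refine ⟨1 - (f x - f u) / (f x - f u₀), (f x - f u) / (f x - f u₀),
          by rw [sub_nonneg]; exact div_le_one_of_le₀ hle hs₀.le,
          div_nonneg hsu.le hs₀.le, by ring, ?_⟩
        funext jj
        have e1 := ha u huE jj
        have e2 := ha u₀ hu₀E jj
        have hs₀ne : f x - f u₀ ≠ 0 := hs₀.ne'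
        simp only [Pi.add_apply, Pi.smul_apply, smul_eq_mul]
        calc (1 - (f x - f u) / (f x - f u₀)) * x jj + (f x - f u) / (f x - f u₀) * u₀ jj
            = x jj - (f x - f u) / (f x - f u₀) * (x jj - u₀ jj) := by ring
          _ = x jj - (f x - f u) / (f x - f u₀) * ((f x - f u₀) * a jj) := by rw [e2]
          _ = x jj - (f x - f u) * a jj := by field_simp
          _ = u jj := by linarith [e1]
    have heq : convexHull ℝ (↑W : Set (Fin n → ℝ)) = convexHull ℝ ({x, u₀} : Set (Fin n → ℝ)) := by
      apply Subset.antisymm (convexHull_min hWsub (convex_convexHull ℝ _))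
      apply convexHull_mono
      rintro z (rfl | rfl)
      · exact Finset.mem_coe.mpr hxW
      · exact Finset.mem_coe.mpr (Finset.mem_of_mem_erase hu₀E)
    have hcoe2 : (↑({x, u₀} : Finset (Fin n → ℝ)) : Set (Fin n → ℝ)) = {x, u₀} := by simp
    have hssub : ({x, u₀} : Finset (Fin n → ℝ)) ⊂ W := by
      refine ssubset_iff_subset_ne.mpr ⟨?_, ?_⟩
      · intro v hv
        rcases Finset.mem_insert.mp hv with rfl | hv
        · exact hxW
        · rw [Finset.mem_singleton.mp hv]; exact Finset.mem_of_mem_erase hu₀E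
      · intro hc
        have h1 : ({x, u₀} : Finset (Fin n → ℝ)).card ≤ 2 :=
          le_trans (Finset.card_insert_le _ _) (by simp)
        rw [hc] at h1
        omega
    refine IH _ hssub (Finset.mem_insert_self _ _) ?_
      ⟨u₀, subset_convexHull ℝ _ (by rw [hcoe2]; exact Set.mem_insert_of_mem _ rfl),
        himpall u₀ hu₀E⟩
    rw [hcoe2, ← heq]
    exact hface
  · -- non-collinear case
    have hj : ∃ j : Fin n, ∀ α : ℝ, ∃ u ∈ W.erase x, x j - u j ≠ α * (f x - f u) := by
      by_contra hcon
      push_neg at hcon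
      choose α hα using hcon
      exact hcol ⟨fun j => α j, fun u huE j => by rw [hα j u huE]; ring⟩
    obtain ⟨j, hj⟩ := hj
    obtain ⟨u₂, hu₂E, hu₂max⟩ := Finset.exists_max_image (W.erase x)
      (fun u => (u j - x j) / (f x - f u)) ⟨us, husE⟩
    set β := (u₂ j - x j) / (f x - f u₂) with hβ
    set h' := β • f + ContinuousLinearMap.proj (R := ℝ) (φ := fun _ : Fin n => ℝ) j with hh'
    have h'app : ∀ z, h' z = β * f z + z j := by
      intro z; rw [hh']; simp [smul_eq_mul]
    have hmax' : ∀ u ∈ W, h' u ≤ h' x := by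
      intro u hu
      by_cases hux : u = x
      · subst hux; exact le_refl _
      · have huE : u ∈ W.erase x := Finset.mem_erase.mpr ⟨hux, hu⟩
        have hsu := hs u huE
        have := (div_le_iff₀ hsu).mp (hu₂max u huE)
        rw [h'app, h'app]
        linarith
    have htight₂ : h' u₂ = h' x := by
      rw [h'app, h'app]
      have h5 : β * (f x - f u₂) = u₂ j - x j := div_mul_cancel₀ _ (hs u₂ hu₂E).ne'
      linarith
    obtain ⟨u₃, hu₃E, hu₃⟩ := hj (-β)
    have hne₃ : h' u₃ ≠ h' x := by
      intro hc
      rw [h'app, h'app] at hc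
      apply hu₃
      linarith
    exact finish h' hmax' ⟨u₂, Finset.mem_of_mem_erase hu₂E, htight₂, himpall u₂ hu₂E⟩
      ⟨u₃, Finset.mem_of_mem_erase hu₃E, hne₃⟩

/-- hull of extreme points of a polytope is the polytope -/
lemma polytope_hull_extremePoints {V : Set (Fin n → ℝ)} (hV : V.Finite) :
    convexHull ℝ (Set.extremePoints ℝ (convexHull ℝ V)) = convexHull ℝ V := by
  have hfin : (Set.extremePoints ℝ (convexHull ℝ V)).Finite :=
    hV.subset extremePoints_convexHull_subset
  have hcl : IsClosed (convexHull ℝ (Set.extremePoints ℝ (convexHull ℝ V))) :=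
    hfin.isClosed_convexHull ℝ
  rw [← hcl.closure_eq]
  exact closure_convexHull_extremePoints (hV.isCompact_convexHull ℝ) (convex_convexHull ℝ V)

noncomputable def intObj (c : Fin n → ℤ) : (Fin n → ℝ) →L[ℝ] ℝ :=
  ∑ j, (c j : ℝ) • ContinuousLinearMap.proj (R := ℝ) (φ := fun _ : Fin n => ℝ) j

lemma intObj_apply (c : Fin n → ℤ) (z : Fin n → ℝ) : intObj c z = ∑ j, (c j : ℝ) * z j := by
  simp [intObj]

lemma intObj_int (c : Fin n → ℤ) (v : Fin n → ℝ) (hv : ∀ j, ∃ z : ℤ, v j = z) :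
    ∃ q : ℤ, intObj c v = q := by
  choose z hz using hv
  refine ⟨∑ j, c j * z j, ?_⟩
  rw [intObj_apply]
  push_cast
  exact Finset.sum_congr rfl fun j _ => by rw [hz j]

/-- Monotone (simplex-like) path to the optimum, with length bounded by the initial gap. -/
lemma monotone_path (P : Set (Fin n → ℝ))
    (hfin : (Set.extremePoints ℝ P).Finite)
    (hPeq : P = convexHull ℝ (Set.extremePoints ℝ P))
    (g : (Fin n → ℝ) →L[ℝ] ℝ)
    (hint : ∀ v ∈ Set.extremePoints ℝ P, ∃ q : ℤ, g v = q) :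
    ∀ (B : ℕ) (x : Fin n → ℝ), x ∈ Set.extremePoints ℝ P →
      (∀ z ∈ P, g z ≤ g x + B) →
      ∃ l : List (Fin n → ℝ), List.Chain' (AdjacentVertices P) (x :: l) ∧
        (∀ v ∈ (x :: l), IsVertex P v) ∧
        (∀ z ∈ P, g z ≤ g ((x :: l).getLast (List.cons_ne_nil x l))) ∧
        l.length ≤ B := by
  intro B
  induction B with
  | zero =>
    intro x hx hb
    refine ⟨[], List.isChain_singleton x, ?_, ?_, le_refl 0⟩
    · intro v hv
      rcases List.mem_singleton.mp hv with rfl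
      exact hx
    · intro z hz
      have := hb z hz
      simpa using this
  | succ B IH =>
    intro x hx hb
    by_cases hopt : ∀ z ∈ P, g z ≤ g x
    · refine ⟨[], List.isChain_singleton x, ?_, ?_, Nat.zero_le _⟩
      · intro v hv
        rcases List.mem_singleton.mp hv with rfl
        exact hx
      · simpa using hopt
    · push_neg at hopt
      obtain ⟨z, hzP, hgz⟩ := hopt
      have hWx : x ∈ hfin.toFinset := hfin.mem_toFinset.mpr hx
      have hWc : convexHull ℝ (↑hfin.toFinset : Set (Fin n → ℝ)) = P := by
        rw [hfin.coe_toFinset, ← hPeq]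
      have hext : IsExtreme ℝ P (convexHull ℝ (↑hfin.toFinset : Set (Fin n → ℝ))) := by
        nth_rewrite 1 [← hWc]
        exact IsExtreme.refl ℝ _
      have hzmem : z ∈ convexHull ℝ (↑hfin.toFinset : Set (Fin n → ℝ)) := by
        rw [hWc]
        exact hzP
      obtain ⟨y, hadj, hgy⟩ := exists_improving_neighbor P g x hx hfin.toFinset hWx
        hext ⟨z, hzmem, hgz⟩
      have hy : y ∈ Set.extremePoints ℝ P := hadj.2.2.1
      have hstep : g x + 1 ≤ g y := by
        obtain ⟨qx, hqx⟩ := hint x hx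
        obtain ⟨qy, hqy⟩ := hint y hy
        rw [hqx, hqy] at hgy ⊢
        have : qx < qy := by exact_mod_cast hgy
        have : qx + 1 ≤ qy := this
        exact_mod_cast this
      obtain ⟨l, hchain, hvert, hlast, hlen⟩ := IH y hy (by
        intro z' hz'
        have := hb z' hz'
        push_cast at this ⊢
        linarith)
      refine ⟨y :: l, List.isChain_cons_cons.mpr ⟨hadj, hchain⟩, ?_, ?_, by
        simpa using Nat.succ_le_succ hlen⟩
      · intro v hv
        rcases List.mem_cons.mp hv with rfl | hv
        · exact hx
        · exact hvert v hv
      · intro z' hz'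
        have hg := hlast z' hz'
        rwa [List.getLast_cons (List.cons_ne_nil y l)]

/-- glue two chains sharing an endpoint -/
lemma chain_glue {α : Type*} {R : α → α → Prop} :
    ∀ (l₁ l₂ : List α) (a : α), List.Chain' R (a :: l₁) →
      List.Chain' R ((a :: l₁).getLast (List.cons_ne_nil a l₁) :: l₂) →
      List.Chain' R (a :: (l₁ ++ l₂)) ∧
        (a :: (l₁ ++ l₂)).getLast (List.cons_ne_nil _ _)
          = ((a :: l₁).getLast (List.cons_ne_nil a l₁) :: l₂).getLast (List.cons_ne_nil _ _) := by
  intro l₁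
  induction l₁ with
  | nil =>
    intro l₂ a h1 h2
    simp only [List.getLast_singleton] at h2
    constructor
    · simpa using h2
    · simp
  | cons b l₁ ih =>
    intro l₂ a h1 h2
    simp only [List.cons_append]
    replace h1 := List.isChain_cons_cons.mp h1
    have hgl : (a :: b :: l₁).getLast (List.cons_ne_nil _ _)
        = (b :: l₁).getLast (List.cons_ne_nil _ _) := List.getLast_cons _
    rw [hgl] at h2
    obtain ⟨hc, he⟩ := ih l₂ b h1.2 h2
    constructor
    · exact List.isChain_cons_cons.mpr ⟨h1.1, hc⟩
    · rw [List.getLast_cons (List.cons_ne_nil _ _), he, hgl]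

lemma gap_small (k : ℕ) (d : Fin n → ℤ) (hd : ∀ j, d j = -1 ∨ d j = 0 ∨ d j = 1)
    (x z : Fin n → ℝ) (hx : ∀ j, 0 ≤ x j ∧ x j ≤ k) (hz : ∀ j, 0 ≤ z j ∧ z j ≤ k) :
    intObj d z ≤ intObj d x + (n : ℝ) * k := by
  rw [intObj_apply, intObj_apply]
  have key : ∀ j : Fin n, (d j : ℝ) * z j - (d j : ℝ) * x j ≤ k := by
    intro j
    rcases hd j with h | h | h <;> rw [h] <;> push_cast <;>
      nlinarith [(hx j).1, (hx j).2, (hz j).1, (hz j).2]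
  have hsum : ∑ j, ((d j : ℝ) * z j - (d j : ℝ) * x j) ≤ ∑ _j : Fin n, (k : ℝ) :=
    Finset.sum_le_sum fun j _ => key j
  rw [Finset.sum_sub_distrib, Finset.sum_const, Finset.card_univ, Fintype.card_fin,
    nsmul_eq_mul] at hsum
  linarith

lemma gap_phase (P : Set (Fin n → ℝ)) (k : ℕ) (hbox : ∀ z ∈ P, ∀ j, 0 ≤ z j ∧ z j ≤ (k:ℝ))
    (dp dn : Fin n → ℤ) (hrel : ∀ j, dp j = dn j / 2)
    (x : Fin n → ℝ) (hxP : x ∈ P) (hxopt : ∀ z ∈ P, intObj dp z ≤ intObj dp x) :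
    ∀ z ∈ P, intObj dn z ≤ intObj dn x + (n : ℝ) * k := by
  intro z hz
  have hsplit : ∀ v : Fin n → ℝ,
      intObj dn v = 2 * intObj dp v + ∑ j, ((dn j - 2 * dp j : ℤ) : ℝ) * v j := by
    intro v
    rw [intObj_apply, intObj_apply, Finset.mul_sum, ← Finset.sum_add_distrib]
    apply Finset.sum_congr rfl
    intro j _
    push_cast
    ring
  have he : ∀ j : Fin n,
      ((dn j - 2 * dp j : ℤ) : ℝ) * z j - ((dn j - 2 * dp j : ℤ) : ℝ) * x j ≤ k := by
    intro j
    have h2 : dn j - 2 * dp j = 0 ∨ dn j - 2 * dp j = 1 := by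
      have ha := Int.mul_ediv_add_emod (dn j) 2
      have hb := Int.emod_two_eq_zero_or_one (dn j)
      have hc := hrel j
      omega
    rcases h2 with h | h <;> rw [h] <;> push_cast <;>
      nlinarith [(hbox z hz j).1, (hbox z hz j).2, (hbox x hxP j).1, (hbox x hxP j).2]
  have hsum : ∑ j, (((dn j - 2 * dp j : ℤ) : ℝ) * z j - ((dn j - 2 * dp j : ℤ) : ℝ) * x j)
      ≤ ∑ _j : Fin n, (k : ℝ) := Finset.sum_le_sum fun j _ => he j
  rw [Finset.sum_sub_distrib, Finset.sum_const, Finset.card_univ, Fintype.card_fin,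
    nsmul_eq_mul] at hsum
  have hopt := hxopt z hz
  rw [hsplit z, hsplit x]
  linarith

def dseq (c : Fin n → ℤ) : ℕ → Fin n → ℤ
  | 0 => c
  | s + 1 => fun j => dseq c s j / 2

lemma dseq_bounds (c : Fin n → ℤ) (s : ℕ) (j : Fin n) :
    2 ^ s * dseq c s j ≤ c j ∧ c j < 2 ^ s * (dseq c s j + 1) := by
  induction s with
  | zero => refine ⟨by simp [dseq], by simp [dseq]⟩
  | succ s ih =>
    have hq : dseq c (s + 1) j = dseq c s j / 2 := rfl
    have hd := Int.mul_ediv_add_emod (dseq c s j) 2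
    have hm := Int.emod_two_eq_zero_or_one (dseq c s j)
    have h1 : 2 * dseq c (s + 1) j ≤ dseq c s j := by rw [hq]; omega
    have h2 : dseq c s j + 1 ≤ 2 * dseq c (s + 1) j + 2 := by rw [hq]; omega
    have hp : (0 : ℤ) ≤ 2 ^ s := by positivity
    constructor
    · calc (2:ℤ) ^ (s + 1) * dseq c (s + 1) j = 2 ^ s * (2 * dseq c (s + 1) j) := by ring
        _ ≤ 2 ^ s * dseq c s j := mul_le_mul_of_nonneg_left h1 hp
        _ ≤ c j := ih.1
    · calc c j < 2 ^ s * (dseq c s j + 1) := ih.2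
        _ ≤ 2 ^ s * (2 * dseq c (s + 1) j + 2) := mul_le_mul_of_nonneg_left h2 hp
        _ = 2 ^ (s + 1) * (dseq c (s + 1) j + 1) := by ring

lemma dseq_top (c : Fin n → ℤ) (T : ℕ) (M : ℕ) (hM : ∀ j, |c j| ≤ (M : ℤ))
    (hT : (M : ℤ) ≤ 2 ^ T) :
    ∀ j, dseq c T j = -1 ∨ dseq c T j = 0 ∨ dseq c T j = 1 := by
  intro j
  obtain ⟨h1, h2⟩ := dseq_bounds c T j
  obtain ⟨ha1, ha2⟩ := abs_le.mp (hM j)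
  have hp : (0 : ℤ) < 2 ^ T := by positivity
  have hle : dseq c T j ≤ 1 := by
    by_contra hcon
    push_neg at hcon
    have : (2:ℤ) ^ T * 2 ≤ 2 ^ T * dseq c T j := mul_le_mul_of_nonneg_left (by omega) hp.le
    linarith
  have hge : -1 ≤ dseq c T j := by
    by_contra hcon
    push_neg at hcon
    have : (2:ℤ) ^ T * (dseq c T j + 1) ≤ 2 ^ T * (-1) :=
      mul_le_mul_of_nonneg_left (by omega) hp.le
    linarith
  omega

lemma phases (P : Set (Fin n → ℝ)) (k : ℕ)
    (hfin : (Set.extremePoints ℝ P).Finite)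
    (hPeq : P = convexHull ℝ (Set.extremePoints ℝ P))
    (hbox : ∀ z ∈ P, ∀ j, 0 ≤ z j ∧ z j ≤ (k:ℝ))
    (hintc : ∀ v ∈ Set.extremePoints ℝ P, ∀ j, ∃ z : ℤ, v j = (z:ℝ))
    (c : Fin n → ℤ) (T : ℕ) (M : ℕ) (hM : ∀ j, |c j| ≤ (M : ℤ)) (hT : (M : ℤ) ≤ 2 ^ T)
    (x0 : Fin n → ℝ) (hx0 : x0 ∈ Set.extremePoints ℝ P) :
    ∀ t : ℕ, t ≤ T →
      ∃ l : List (Fin n → ℝ), List.Chain' (AdjacentVertices P) (x0 :: l) ∧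
        (∀ v ∈ (x0 :: l), IsVertex P v) ∧
        (∀ z ∈ P, intObj (dseq c (T - t)) z
          ≤ intObj (dseq c (T - t)) ((x0 :: l).getLast (List.cons_ne_nil x0 l))) ∧
        l.length ≤ (t + 1) * (n * k) := by
  have hobjint : ∀ (d : Fin n → ℤ), ∀ v ∈ Set.extremePoints ℝ P, ∃ q : ℤ, intObj d v = q :=
    fun d v hv => intObj_int d v (hintc v hv)
  intro t
  induction t with
  | zero =>
    intro _
    obtain ⟨l, h1, h2, h3, h4⟩ := monotone_path P hfin hPeq (intObj (dseq c T)) (hobjint _)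
      (n * k) x0 hx0 (by
        intro z hz
        have := gap_small k (dseq c T) (dseq_top c T M hM hT) x0 z
          (hbox x0 (extremePoints_subset hx0)) (hbox z hz)
        push_cast
        linarith)
    exact ⟨l, h1, h2, by simpa using h3, by simpa using h4⟩
  | succ t iht =>
    intro ht1
    obtain ⟨l₁, h1, h2, h3, h4⟩ := iht (by omega)
    set y := (x0 :: l₁).getLast (List.cons_ne_nil x0 l₁) with hy
    have hyv : y ∈ Set.extremePoints ℝ P := h2 y (List.getLast_mem _)
    have hstep : T - t = (T - (t + 1)) + 1 := by omega
    have hrel : ∀ j, dseq c (T - t) j = dseq c (T - (t + 1)) j / 2 := by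
      intro j; rw [hstep]; rfl
    obtain ⟨l₂, g1, g2, g3, g4⟩ := monotone_path P hfin hPeq
      (intObj (dseq c (T - (t + 1)))) (hobjint _) (n * k) y hyv (by
        intro z hz
        have := gap_phase P k hbox (dseq c (T - t)) (dseq c (T - (t + 1))) hrel y
          (extremePoints_subset hyv) h3 z hz
        push_cast
        linarith)
    obtain ⟨hc, he⟩ := chain_glue l₁ l₂ x0 h1 g1
    refine ⟨l₁ ++ l₂, hc, ?_, ?_, ?_⟩
    · intro v hv
      rcases List.mem_cons.mp hv with rfl | hv
      · exact h2 v List.mem_cons_self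
      · rcases List.mem_append.mp hv with hv | hv
        · exact h2 v (List.mem_cons_of_mem _ hv)
        · exact g2 v (List.mem_cons_of_mem _ hv)
    · intro z hz
      rw [he]
      exact g3 z hz
    · rw [List.length_append]
      have : (t + 1 + 1) * (n * k) = (t + 1) * (n * k) + n * k := by ring
      omega

end Aux

theorem short_simplex_path_scaling
    (n k : ℕ) (hn : 1 ≤ n) (hk : 1 ≤ k)
    (P : Set (Fin n → ℝ)) (hP : IsZeroKPolytope n k P)
    (c : Fin n → ℤ) (hc : c ≠ 0)
    (M : ℕ) (hM : M = Finset.univ.sup fun j => (c j).natAbs)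
    (x0 : Fin n → ℝ) (hx0 : IsVertex P x0) :
    ∃ (N : ℕ) (path : Fin (N + 1) → (Fin n → ℝ)),
      path 0 = x0 ∧
      (∀ t, IsVertex P (path t)) ∧
      (∀ t : Fin N, AdjacentVertices P (path t.castSucc) (path t.succ)) ∧
      (∀ x ∈ P, ∑ j, (c j : ℝ) * x j ≤ ∑ j, (c j : ℝ) * path (Fin.last N) j) ∧
      (N : ℤ) ≤ n * k * (⌈Real.logb 2 (M : ℝ)⌉ + 1) := by
  obtain ⟨⟨V, hVfin, hPV⟩, hbox, hintc⟩ := hP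
  have hfin : (Set.extremePoints ℝ P).Finite := by
    rw [hPV]
    exact hVfin.subset extremePoints_convexHull_subset
  have hPeq : P = convexHull ℝ (Set.extremePoints ℝ P) := by
    conv_lhs => rw [hPV]
    rw [hPV]
    exact (polytope_hull_extremePoints hVfin).symm
  have hintc' : ∀ v ∈ Set.extremePoints ℝ P, ∀ j, ∃ z : ℤ, v j = (z:ℝ) := fun v hv => hintc v hv
  -- M facts
  have habs : ∀ j, |c j| ≤ (M : ℤ) := by
    intro j
    rw [Int.abs_eq_natAbs, hM]
    exact_mod_cast Finset.le_sup (f := fun j => (c j).natAbs) (Finset.mem_univ j)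
  have hM1 : 1 ≤ M := by
    obtain ⟨j, hj⟩ := Function.ne_iff.mp hc
    have : 1 ≤ (c j).natAbs := by
      rcases Int.natAbs_eq_zero.mp.mt (fun h => hj h) with _
      omega
    calc 1 ≤ (c j).natAbs := this
      _ ≤ M := by rw [hM]; exact Finset.le_sup (f := fun j => (c j).natAbs) (Finset.mem_univ j)
  set T := Nat.clog 2 M with hT
  have hTpow : (M : ℤ) ≤ 2 ^ T := by exact_mod_cast Nat.le_pow_clog one_lt_two M
  obtain ⟨l, h1, h2, h3, h4⟩ := phases P k hfin hPeq hbox hintc' c T M habs hTpow x0 hx0 T le_rfl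
  rw [Nat.sub_self] at h3
  -- h3 with dseq c 0 = c
  have hd0 : dseq c 0 = c := rfl
  rw [hd0] at h3
  -- build the Fin path
  set N := l.length with hN
  have hlen : (x0 :: l).length = N + 1 := by simp [hN]
  refine ⟨N, fun t => (x0 :: l).get (Fin.cast hlen.symm t), rfl, ?_, ?_, ?_, ?_⟩
  · intro t
    exact h2 _ (List.get_mem _ _)
  · intro t
    have hch := List.isChain_iff_getElem.mp h1
    exact hch t.val (by simp [hlen])
  · intro x hx
    have hgl : (x0 :: l).getLast (List.cons_ne_nil x0 l)
        = (x0 :: l).get (Fin.cast hlen.symm (Fin.last N)) := by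
      rw [List.getLast_eq_getElem, List.get_eq_getElem]
      congr 1 <;> simp [hlen]
    have := h3 x hx
    rw [intObj_apply, intObj_apply, hgl] at this
    exact this
  · -- length bound
    have hTlog : (T : ℤ) ≤ ⌈Real.logb 2 (M : ℝ)⌉ := by
      rcases Nat.lt_or_ge M 2 with hM2 | hM2
      · have : M = 1 := by omega
        subst this
        simp [hT, Nat.clog_one_right, Real.logb_one]
      · have hpow : (2:ℕ) ^ (T - 1) < M := Nat.pow_pred_clog_lt_self one_lt_two (by omega)
        have hlog : ((T - 1 : ℕ) : ℝ) < Real.logb 2 (M : ℝ) := by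
          have h2 : Real.logb 2 ((2:ℝ) ^ (T - 1 : ℕ)) = ((T - 1 : ℕ) : ℝ) := by
            rw [Real.logb_pow, Real.logb_self_eq_one one_lt_two]
            · ring
          rw [← h2]
          apply Real.logb_lt_logb one_lt_two (by positivity)
          exact_mod_cast hpow
        have hT1 : 1 ≤ T := Nat.clog_pos one_lt_two (by omega)
        have hceil : (T : ℤ) - 1 < ⌈Real.logb 2 (M : ℝ)⌉ := by
          apply Int.lt_ceil.mpr
          have : (((T : ℤ) - 1 : ℤ) : ℝ) = ((T - 1 : ℕ) : ℝ) := by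
            push_cast [Nat.cast_sub hT1]
            ring
          rw [this]
          exact hlog
        linarith
    have h4' : (N : ℤ) ≤ (T + 1) * (n * k) := by exact_mod_cast h4
    have hnk : (0:ℤ) ≤ (n:ℤ) * k := by positivity
    calc (N : ℤ) ≤ (T + 1) * (n * k) := h4'
      _ ≤ (⌈Real.logb 2 (M : ℝ)⌉ + 1) * (n * k) := by
          apply mul_le_mul_of_nonneg_right _ hnk
          linarith
      _ = n * k * (⌈Real.logb 2 (M : ℝ)⌉ + 1) := by ring
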